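/- arXiv:1209.1066 — 6 statements merged into one kernel-verified Lean document; each statement's English description precedes it below -/
import Mathlib

section
/- Let f, g : ℂⁿ → ℂ be holomorphic. A point z is a critical point of the real-analytic map f·conj(g) : ℂⁿ → ℂ (i.e. the real Jacobian has rank < 2) if and only if for all indices i, j one has: f(z)·g(z)·(∂f/∂zᵢ·∂g/∂zⱼ − ∂f/∂zⱼ·∂g/∂zᵢ) = 0, and |f(z)·∂g/∂zᵢ(z)| = |g(z)·∂f/∂zᵢ(z)|, and |f(z)|²·∂g/∂zᵢ(z)·conj(∂g/∂zⱼ(z)) = |g(z)|²·∂f/∂zᵢ(z)·conj(∂f/∂zⱼ(z)). -/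
open Complex ComplexConjugate


-- mini lemma: Re(α+β)=0 and Re(I*α - I*β)=0 implies β = -conj α
private lemma crit_mini (α β : ℂ) (h1 : (α + β).re = 0) (h2 : (Complex.I * α - Complex.I * β).re = 0) :
    β = -conj α := by
  apply Complex.ext <;>
    simp only [Complex.add_re, Complex.sub_re, Complex.mul_re, Complex.I_re, Complex.I_im,
      Complex.neg_re, Complex.neg_im, Complex.conj_re, Complex.conj_im] at * <;> linarith

private lemma crit_fderiv (n : ℕ) (f g : (Fin n → ℂ) → ℂ) (hf : Differentiable ℂ f)
    (hg : Differentiable ℂ g) (z : Fin n → ℂ) (v : Fin n → ℂ) :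
    fderiv ℝ (fun w => f w * (starRingEnd ℂ) (g w)) z v
      = conj (g z) * fderiv ℂ f z v + f z * conj (fderiv ℂ g z v) := by
  have hfz : HasFDerivAt f ((fderiv ℂ f z).restrictScalars ℝ) z :=
    (hf z).hasFDerivAt.restrictScalars ℝ
  have hgz : HasFDerivAt g ((fderiv ℂ g z).restrictScalars ℝ) z :=
    (hg z).hasFDerivAt.restrictScalars ℝ
  have hcg : HasFDerivAt (fun w => (starRingEnd ℂ) (g w))
      ((Complex.conjCLE.toContinuousLinearMap).comp ((fderiv ℂ g z).restrictScalars ℝ)) z :=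
    (Complex.conjCLE.toContinuousLinearMap.hasFDerivAt).comp z hgz
  rw [show (fun w => f w * (starRingEnd ℂ) (g w)) = f * fun w => (starRingEnd ℂ) (g w) from rfl,
    (hfz.mul hcg).fderiv]
  simp [Complex.conjCLE_apply, smul_eq_mul]
  ring


private lemma crit_deduce (c fz gz Fi Fj Gi Gj : ℂ) (hc : c ≠ 0)
    (ki : conj c * (fz * conj Gi) = -(c * (gz * conj Fi)))
    (kj : conj c * (fz * conj Gj) = -(c * (gz * conj Fj))) :
    fz * gz * (Fi * Gj - Fj * Gi) = 0 ∧
    ‖fz * Gi‖ = ‖gz * Fi‖ ∧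
    ((‖fz‖ : ℂ))^2 * Gi * conj Gj = ((‖gz‖ : ℂ))^2 * Fi * conj Fj := by
  have hcc : conj c ≠ 0 := by simpa using hc
  have habs_f : ((‖fz‖ : ℂ))^2 = fz * conj fz := by
    rw [Complex.mul_conj]; norm_cast; exact Complex.sq_norm _
  have habs_g : ((‖gz‖ : ℂ))^2 = gz * conj gz := by
    rw [Complex.mul_conj]; norm_cast; exact Complex.sq_norm _
  refine ⟨?_, ?_, ?_⟩
  · have hE : conj c * (fz * (conj Gi * conj Fj - conj Gj * conj Fi)) = 0 := by
      linear_combination conj Fj * ki - conj Fi * kj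
    have hE2 : fz * (conj Gi * conj Fj - conj Gj * conj Fi) = 0 := by
      rcases mul_eq_zero.mp hE with h | h
      · exact absurd h hcc
      · exact h
    have hE3 : conj fz * (Gi * Fj - Gj * Fi) = 0 := by
      have := congrArg (starRingEnd ℂ) hE2
      simpa [map_mul, map_sub] using this
    rcases mul_eq_zero.mp hE3 with h | h
    · have : fz = 0 := by simpa using h
      rw [this]; ring
    · have : Fi * Gj - Fj * Gi = 0 := by linear_combination -h
      rw [this]; ring
  · have h := congrArg (‖·‖) ki
    simp only [norm_mul, norm_neg, Complex.norm_conj] at h ⊢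
    exact mul_left_cancel₀ (norm_ne_zero_iff.mpr hc) h
  · have kic : c * (conj fz * Gi) = -(conj c * (conj gz * Fi)) := by
      have := congrArg (starRingEnd ℂ) ki
      simpa [map_mul, map_neg, Complex.conj_conj] using this
    have hcmul : c * conj c ≠ 0 := mul_ne_zero hc hcc
    have big : (c * conj c) * (((‖fz‖ : ℂ))^2 * Gi * conj Gj)
        = (c * conj c) * (((‖gz‖ : ℂ))^2 * Fi * conj Fj) := by
      rw [habs_f, habs_g]
      linear_combination (conj c * (fz * conj Gj)) * kic - (conj c * (conj gz * Fi)) * kj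
    exact mul_left_cancel₀ hcmul big


private lemma crit_lambda {n : ℕ} (a b : Fin n → ℂ)
    (hab : ∀ i j, a i * conj (a j) = b i * conj (b j)) :
    ∃ l : ℂ, ‖l‖ = 1 ∧ ∀ i, a i = l * b i := by
  by_cases hb0 : ∀ i, b i = 0
  · refine ⟨1, by simp, fun i => ?_⟩
    have h0 := hab i i
    rw [hb0 i] at h0
    simp only [zero_mul, Complex.mul_conj] at h0
    have : a i = 0 := by
      rw [← Complex.normSq_eq_zero]
      exact_mod_cast h0
    rw [this, hb0 i, mul_zero]
  · push_neg at hb0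
    obtain ⟨k, hk⟩ := hb0
    have hnormeq : Complex.normSq (a k) = Complex.normSq (b k) := by
      have := hab k k
      rw [Complex.mul_conj, Complex.mul_conj] at this
      exact_mod_cast this
    have hak : a k ≠ 0 := by
      intro h0
      rw [h0, map_zero] at hnormeq
      exact hk (Complex.normSq_eq_zero.mp hnormeq.symm)
    have hack : conj (a k) ≠ 0 := by simpa using hak
    refine ⟨conj (b k) / conj (a k), ?_, fun i => ?_⟩
    · rw [norm_div, Complex.norm_conj, Complex.norm_conj,
        div_eq_one_iff_eq (norm_ne_zero_iff.mpr hak), Complex.norm_def, Complex.norm_def,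
        hnormeq]
    · rw [div_mul_eq_mul_div, eq_div_iff hack]
      linear_combination hab i k


/-- For holomorphic `f, g : ℂⁿ → ℂ`, a point `z` is a critical point of the
real-analytic map `f·conj(g)` (real differential not surjective onto `ℂ ≅ ℝ²`) iff for all
`i, j`: `f·g·(∂ᵢf·∂ⱼg − ∂ⱼf·∂ᵢg) = 0`, `|f·∂ᵢg| = |g·∂ᵢf|`, and
`|f|²·∂ᵢg·conj(∂ⱼg) = |g|²·∂ᵢf·conj(∂ⱼf)`. -/
theorem stmt_1 (n : ℕ) (f g : (Fin n → ℂ) → ℂ)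
    (hf : Differentiable ℂ f) (hg : Differentiable ℂ g) (z : Fin n → ℂ) :
    (¬ Function.Surjective (fderiv ℝ (fun w => f w * (starRingEnd ℂ) (g w)) z)) ↔
    (∀ i j : Fin n,
      f z * g z * (fderiv ℂ f z (Pi.single i 1) * fderiv ℂ g z (Pi.single j 1)
        - fderiv ℂ f z (Pi.single j 1) * fderiv ℂ g z (Pi.single i 1)) = 0 ∧
      ‖f z * fderiv ℂ g z (Pi.single i 1)‖
        = ‖g z * fderiv ℂ f z (Pi.single i 1)‖ ∧
      ((‖f z‖ : ℂ))^2 * fderiv ℂ g z (Pi.single i 1)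
          * (starRingEnd ℂ) (fderiv ℂ g z (Pi.single j 1))
        = ((‖g z‖ : ℂ))^2 * fderiv ℂ f z (Pi.single i 1)
          * (starRingEnd ℂ) (fderiv ℂ f z (Pi.single j 1))) := by
  set T := fderiv ℝ (fun w => f w * (starRingEnd ℂ) (g w)) z with hTdef
  have hT : ∀ v, T v = conj (g z) * fderiv ℂ f z v + f z * conj (fderiv ℂ g z v) :=
    crit_fderiv n f g hf hg z
  constructor
  · intro hns
    have hrange : LinearMap.range (T : (Fin n → ℂ) →ₗ[ℝ] ℂ) ≠ ⊤ := by
      intro h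
      exact hns (LinearMap.range_eq_top.mp h)
    have horth : (LinearMap.range (T : (Fin n → ℂ) →ₗ[ℝ] ℂ))ᗮ ≠ ⊥ := by
      intro h; exact hrange (Submodule.orthogonal_eq_bot_iff.mp h)
    obtain ⟨c, hc, hc0⟩ := Submodule.exists_mem_ne_zero_of_ne_bot horth
    have hcv : ∀ v, (conj c * T v).re = 0 := by
      intro v
      have h := (Submodule.mem_orthogonal _ c).mp hc (T v) ⟨v, rfl⟩
      rw [real_inner_comm] at h
      rw [Complex.inner, mul_comm] at h
      exact h
    have key : ∀ i : Fin n, conj c * (f z * conj (fderiv ℂ g z (Pi.single i 1)))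
        = -(c * (g z * conj (fderiv ℂ f z (Pi.single i 1)))) := by
      intro i
      have h1 := hcv (Pi.single i 1)
      have h2 := hcv (Pi.single i Complex.I)
      rw [hT] at h1 h2
      have hsI : (Pi.single i Complex.I : Fin n → ℂ)
          = Complex.I • (Pi.single i (1:ℂ) : Fin n → ℂ) := by
        ext j
        by_cases h : j = i <;> simp [Pi.single_apply, h]
      have h1' : (conj c * (conj (g z) * fderiv ℂ f z (Pi.single i 1))
          + conj c * (f z * conj (fderiv ℂ g z (Pi.single i 1)))).re = 0 := by
        have e : conj c * (conj (g z) * fderiv ℂ f z (Pi.single i 1))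
            + conj c * (f z * conj (fderiv ℂ g z (Pi.single i 1)))
            = conj c * (conj (g z) * fderiv ℂ f z (Pi.single i 1)
            + f z * conj (fderiv ℂ g z (Pi.single i 1))) := by ring
        rw [e]; exact h1
      have h2' : (Complex.I * (conj c * (conj (g z) * fderiv ℂ f z (Pi.single i 1)))
          - Complex.I * (conj c * (f z * conj (fderiv ℂ g z (Pi.single i 1))))).re = 0 := by
        have e : Complex.I * (conj c * (conj (g z) * fderiv ℂ f z (Pi.single i 1)))
            - Complex.I * (conj c * (f z * conj (fderiv ℂ g z (Pi.single i 1))))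
            = conj c * (conj (g z) * fderiv ℂ f z (Pi.single i Complex.I)
              + f z * conj (fderiv ℂ g z (Pi.single i Complex.I))) := by
          rw [hsI, map_smul, map_smul]
          simp only [smul_eq_mul, map_mul, Complex.conj_I]
          ring
        rw [e]; exact h2
      have hmini := crit_mini _ _ h1' h2'
      rw [hmini]
      simp only [map_mul, Complex.conj_conj]
    intro i j
    exact crit_deduce c (f z) (g z) (fderiv ℂ f z (Pi.single i 1)) (fderiv ℂ f z (Pi.single j 1))
      (fderiv ℂ g z (Pi.single i 1)) (fderiv ℂ g z (Pi.single j 1)) hc0 (key i) (key j)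
  · intro H hsurj
    have habs_f : ((‖f z‖ : ℂ))^2 = f z * conj (f z) := by
      rw [Complex.mul_conj]; norm_cast; exact Complex.sq_norm _
    have habs_g : ((‖g z‖ : ℂ))^2 = g z * conj (g z) := by
      rw [Complex.mul_conj]; norm_cast; exact Complex.sq_norm _
    have hab : ∀ i j : Fin n,
        (conj (g z) * fderiv ℂ f z (Pi.single i 1))
          * conj (conj (g z) * fderiv ℂ f z (Pi.single j 1))
        = (conj (f z) * fderiv ℂ g z (Pi.single i 1))
          * conj (conj (f z) * fderiv ℂ g z (Pi.single j 1)) := by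
      intro i j
      have h3 := (H i j).2.2
      simp only [map_mul, Complex.conj_conj]
      linear_combination -h3 - (fderiv ℂ f z (Pi.single i 1)
          * conj (fderiv ℂ f z (Pi.single j 1))) * habs_g
        + (fderiv ℂ g z (Pi.single i 1) * conj (fderiv ℂ g z (Pi.single j 1))) * habs_f
    obtain ⟨l, hl1, hl⟩ := crit_lambda
      (fun i => conj (g z) * fderiv ℂ f z (Pi.single i 1))
      (fun i => conj (f z) * fderiv ℂ g z (Pi.single i 1)) hab
    have hlin : ∀ v, conj (g z) * fderiv ℂ f z v
        = l * (conj (f z) * fderiv ℂ g z v) := by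
      intro v
      have hF := LinearMap.pi_apply_eq_sum_univ ((fderiv ℂ f z) : (Fin n → ℂ) →ₗ[ℂ] ℂ) v
      have hG := LinearMap.pi_apply_eq_sum_univ ((fderiv ℂ g z) : (Fin n → ℂ) →ₗ[ℂ] ℂ) v
      simp only [ContinuousLinearMap.coe_coe] at hF hG
      have hsingle : ∀ i : Fin n, (fun j => if i = j then (1:ℂ) else 0) = Pi.single i 1 := by
        intro i; ext j; simp [Pi.single_apply, eq_comm]
      simp only [hsingle] at hF hG
      rw [hF, hG, Finset.mul_sum, Finset.mul_sum, Finset.mul_sum]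
      apply Finset.sum_congr rfl
      intro i _
      have hli := hl i
      simp only [smul_eq_mul]
      calc conj (g z) * (v i * fderiv ℂ f z (Pi.single i 1))
          = v i * (conj (g z) * fderiv ℂ f z (Pi.single i 1)) := by ring
        _ = v i * (l * (conj (f z) * fderiv ℂ g z (Pi.single i 1))) := by rw [hli]
        _ = l * (conj (f z) * (v i * fderiv ℂ g z (Pi.single i 1))) := by ring
    have hll : l * conj l = 1 := by
      rw [Complex.mul_conj]
      norm_cast
      rw [Complex.normSq_eq_norm_sq, hl1]; norm_num
    have hconjT : ∀ v, conj (T v) = conj l * T v := by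
      intro v
      rw [hT v, hlin v]
      simp only [map_add, map_mul, Complex.conj_conj]
      linear_combination (-(conj (f z) * fderiv ℂ g z v)) * hll
    obtain ⟨v1, hv1⟩ := hsurj 1
    obtain ⟨v2, hv2⟩ := hsurj Complex.I
    have e1 := hconjT v1
    rw [hv1, map_one, mul_one] at e1
    have e2 := hconjT v2
    rw [hv2, Complex.conj_I, ← e1, one_mul] at e2
    simp [Complex.ext_iff] at e2
    norm_num at e2
end

section
/- Let f, g : (ℂⁿ,0) → (ℂ,0) be holomorphic germs such that f·conj(g) has an isolated critical value at 0 ∈ ℂ (i.e. the critical set is contained in (fg)^{-1}(0)). Then the critical set of f·conj(g) equals Σ(f) ∪ Σ(g) ∪ (f^{-1}(0) ∩ g^{-1}(0)), where Σ(f) and Σ(g) denote the critical sets of f and g contained in their zero sets. -/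
private lemma clin_zero {n : ℕ} (L : (Fin n → ℂ) →L[ℂ] ℂ)
    (h : ∀ i, L (Pi.single i 1) = 0) (v : Fin n → ℂ) : L v = 0 := by
  have hv : v = ∑ i, (v i) • (Pi.single i (1:ℂ) : Fin n → ℂ) := by
    funext j
    simp [Finset.sum_apply, Pi.single_apply, eq_comm]
  rw [hv, map_sum]
  simp [h]

/-- If `f·conj(g)` has an isolated critical value at `0` (its critical set is
contained in the zero set of `f·conj g`), then the critical set of `f·conj(g)` equals
`Σ(f) ∪ Σ(g) ∪ (f⁻¹(0) ∩ g⁻¹(0))`. -/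
theorem stmt_2 (n : ℕ) (f g : (Fin n → ℂ) → ℂ)
    (hf : Differentiable ℂ f) (hg : Differentiable ℂ g) (hf0 : f 0 = 0) (hg0 : g 0 = 0)
    (hicv : {z | ¬ Function.Surjective (fderiv ℝ (fun w => f w * (starRingEnd ℂ) (g w)) z)}
      ⊆ {z | f z * (starRingEnd ℂ) (g z) = 0}) :
    {z | ¬ Function.Surjective (fderiv ℝ (fun w => f w * (starRingEnd ℂ) (g w)) z)} =
      {z | f z = 0 ∧ ∀ i, fderiv ℂ f z (Pi.single i 1) = 0} ∪
      {z | g z = 0 ∧ ∀ i, fderiv ℂ g z (Pi.single i 1) = 0} ∪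
      (f ⁻¹' {0} ∩ g ⁻¹' {0}) := by
  ext z
  set Lf := fderiv ℂ f z with hLfdef
  set Lg := fderiv ℂ g z with hLgdef
  have hdf : HasFDerivAt f (Lf.restrictScalars ℝ) z := ((hf z).hasFDerivAt).restrictScalars ℝ
  have hdg : HasFDerivAt (fun w => (starRingEnd ℂ) (g w))
      ((Complex.conjCLE.toContinuousLinearMap).comp (Lg.restrictScalars ℝ)) z := by
    exact (Complex.conjCLE.toContinuousLinearMap.hasFDerivAt).comp z
      (((hg z).hasFDerivAt).restrictScalars ℝ)
  have hD : HasFDerivAt (fun w => f w * (starRingEnd ℂ) (g w))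
      (f z • ((Complex.conjCLE.toContinuousLinearMap).comp (Lg.restrictScalars ℝ)) +
        (starRingEnd ℂ) (g z) • (Lf.restrictScalars ℝ)) z := hdf.mul hdg
  have hDapp : ∀ v, fderiv ℝ (fun w => f w * (starRingEnd ℂ) (g w)) z v
      = f z * (starRingEnd ℂ) (Lg v) + (starRingEnd ℂ) (g z) * Lf v := by
    intro v
    rw [hD.fderiv]
    simp [Complex.conjCLE_apply, smul_eq_mul]
  constructor
  · intro hcrit
    have h0 : f z = 0 ∨ g z = 0 := by
      have h := hicv hcrit
      simp only [Set.mem_setOf_eq, mul_eq_zero, map_eq_zero] at h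
      exact h
    by_cases hfz : f z = 0 <;> by_cases hgz : g z = 0
    · exact Or.inr ⟨hfz, hgz⟩
    · refine Or.inl (Or.inl ⟨hfz, fun i => ?_⟩)
      by_contra hne
      apply hcrit
      intro c
      refine ⟨(c / ((starRingEnd ℂ) (g z) * Lf (Pi.single i 1))) • (Pi.single i 1 : Fin n → ℂ), ?_⟩
      rw [hDapp, hfz]
      have hLsmul : Lf ((c / ((starRingEnd ℂ) (g z) * Lf (Pi.single i 1))) • (Pi.single i 1 : Fin n → ℂ))
          = (c / ((starRingEnd ℂ) (g z) * Lf (Pi.single i 1))) * Lf (Pi.single i 1) :=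
        Lf.map_smul _ _
      rw [hLsmul]
      have hgz' : (starRingEnd ℂ) (g z) ≠ 0 := by simpa using hgz
      field_simp
      simp only [zero_mul, zero_add]
      exact mul_div_cancel_right₀ c hne
    · refine Or.inl (Or.inr ⟨hgz, fun i => ?_⟩)
      by_contra hne
      apply hcrit
      intro c
      refine ⟨((starRingEnd ℂ) (c / f z) / Lg (Pi.single i 1)) • (Pi.single i 1 : Fin n → ℂ), ?_⟩
      rw [hDapp, hgz]
      have hLsmul : Lg (((starRingEnd ℂ) (c / f z) / Lg (Pi.single i 1)) • (Pi.single i 1 : Fin n → ℂ))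
          = ((starRingEnd ℂ) (c / f z) / Lg (Pi.single i 1)) * Lg (Pi.single i 1) :=
        Lg.map_smul _ _
      rw [hLsmul]
      have hne'' : Lg (Pi.single i 1) ≠ 0 := hne
      rw [div_mul_cancel₀ _ hne'', Complex.conj_conj]
      simp only [map_zero, zero_mul, add_zero]
      rw [mul_comm, div_mul_cancel₀ _ hfz]
    · exact absurd h0 (by simp [hfz, hgz])
  · intro h hsurj
    obtain ⟨v, hv⟩ := hsurj 1
    rw [hDapp] at hv
    rcases h with (⟨h1, h2⟩ | ⟨h1, h2⟩) | ⟨h1, h2⟩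
    · have : Lf v = 0 := clin_zero Lf h2 v
      rw [h1, this] at hv
      simp at hv
    · have : Lg v = 0 := clin_zero Lg h2 v
      rw [h1, this] at hv
      simp at hv
    · simp only [Set.mem_preimage, Set.mem_singleton_iff] at h1 h2
      rw [h1, h2] at hv
      simp at hv
end

section
/- Let f, g : (ℂⁿ,0) → (ℂ,0) be holomorphic germs such that f·conj(g) has an isolated critical value at 0. Then the critical set of the real-analytic map f·conj(g) equals the critical set of the holomorphic product fg, namely {z : ∂(fg)/∂zᵢ(z) = 0 for all i = 1, …, n}. In particular the critical set of f·conj(g) is a complex analytic variety. -/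
/-- If `f·conj(g)` has an isolated critical value at `0`, then the critical set
of the real-analytic map `f·conj(g)` equals the critical set of the holomorphic product `fg`,
i.e. `{z | ∂(fg)/∂zᵢ(z) = 0 for all i}`; in particular it is a complex analytic variety. -/
theorem stmt_3 (n : ℕ) (f g : (Fin n → ℂ) → ℂ)
    (hf : Differentiable ℂ f) (hg : Differentiable ℂ g) (hf0 : f 0 = 0) (hg0 : g 0 = 0)
    (hicv : {z | ¬ Function.Surjective (fderiv ℝ (fun w => f w * (starRingEnd ℂ) (g w)) z)}
      ⊆ {z | f z * (starRingEnd ℂ) (g z) = 0}) :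
    {z | ¬ Function.Surjective (fderiv ℝ (fun w => f w * (starRingEnd ℂ) (g w)) z)} =
      {z | ∀ i, fderiv ℂ (fun w => f w * g w) z (Pi.single i 1) = 0} := by
  ext z
  simp only [Set.mem_setOf_eq]
  set F := fderiv ℂ f z with hFdef
  set G := fderiv ℂ g z with hGdef
  -- derivative of the holomorphic product
  have hfg : ∀ v, fderiv ℂ (fun w => f w * g w) z v = g z * F v + f z * G v := by
    intro v
    rw [fderiv_fun_mul (hf z) (hg z)]
    simp [mul_comm]
    ring
  -- derivative of f * conj g
  have hfd : HasFDerivAt f (F.restrictScalars ℝ) z := ((hf z).hasFDerivAt).restrictScalars ℝ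
  have hgd : HasFDerivAt g (G.restrictScalars ℝ) z := ((hg z).hasFDerivAt).restrictScalars ℝ
  have hgds : HasFDerivAt (fun w => (starRingEnd ℂ) (g w))
      (((starL' ℝ : ℂ ≃L[ℝ] ℂ) : ℂ →L[ℝ] ℂ).comp (G.restrictScalars ℝ)) z := hgd.star
  have hmul := hfd.mul hgds
  have key : ∀ v, fderiv ℝ (fun w => f w * (starRingEnd ℂ) (g w)) z v
      = (starRingEnd ℂ) (g z) * F v + f z * (starRingEnd ℂ) (G v) := by
    intro v
    rw [show (fun w => f w * (starRingEnd ℂ) (g w)) = f * fun w => (starRingEnd ℂ) (g w) from rfl,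
      hmul.fderiv]
    simp only [ContinuousLinearMap.add_apply, ContinuousLinearMap.coe_smul', Pi.smul_apply,
      ContinuousLinearMap.coe_comp', Function.comp_apply,
      ContinuousLinearMap.coe_restrictScalars', smul_eq_mul]
    rw [add_comm]
    rfl
  constructor
  · intro hns
    have h0 : f z * (starRingEnd ℂ) (g z) = 0 := hicv hns
    rcases mul_eq_zero.1 h0 with hfz | hgz'
    · -- f z = 0
      have hFg : ∀ v, g z * F v = 0 := by
        intro v
        by_contra hne
        apply hns
        intro t
        have hq : g z ≠ 0 := fun h => hne (by simp [h])
        have hFv : F v ≠ 0 := fun h => hne (by simp [h])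
        refine ⟨(t / ((starRingEnd ℂ) (g z) * F v)) • v, ?_⟩
        rw [key]
        have hqc : (starRingEnd ℂ) (g z) ≠ 0 := by simpa using hq
        simp only [map_smul, smul_eq_mul, hfz, zero_mul, add_zero, mul_zero, map_zero]
        field_simp
      intro i
      rw [hfg, hfz, zero_mul, add_zero, hFg]
    · -- g z = 0
      have hgz : g z = 0 := by simpa using hgz'
      have hGf : ∀ v, f z * G v = 0 := by
        intro v
        by_contra hne
        apply hns
        intro t
        have hp : f z ≠ 0 := fun h => hne (by simp [h])
        have hGv : G v ≠ 0 := fun h => hne (by simp [h])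
        refine ⟨((starRingEnd ℂ) t / ((starRingEnd ℂ) (f z) * G v)) • v, ?_⟩
        rw [key]
        have hpc : (starRingEnd ℂ) (f z) ≠ 0 := by simpa using hp
        have hGvc : (starRingEnd ℂ) (G v) ≠ 0 := by simpa using hGv
        simp only [map_smul, smul_eq_mul, hgz', zero_mul, zero_add, map_mul, map_div₀,
          Complex.conj_conj]
        field_simp
      intro i
      rw [hfg, hgz, zero_mul, zero_add, hGf]
  · intro H
    -- upgrade to all vectors
    have Hv : ∀ v, g z * F v + f z * G v = 0 := by
      intro v
      have hv : v = ∑ i, v i • (Pi.single i 1 : Fin n → ℂ) := by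
        conv_lhs => rw [← Finset.univ_sum_single v]
        refine Finset.sum_congr rfl fun i _ => ?_
        rw [← Pi.single_smul, smul_eq_mul, mul_one]
      have hT : ∀ w, g z * F w + f z * G w = (g z • F + f z • G) w := by
        intro w; simp [mul_comm]
      rw [hT, hv, map_sum]
      refine Finset.sum_eq_zero fun i _ => ?_
      rw [map_smul]
      have : (g z • F + f z • G) (Pi.single i 1) = 0 := by
        rw [← hT, ← hfg]; exact H i
      rw [this, smul_zero]
    intro hs
    by_cases hfz : f z = 0
    · by_cases hgz : g z = 0
      · obtain ⟨v, hv⟩ := hs 1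
        rw [key, hfz, hgz] at hv
        simp at hv
      · have hF0 : ∀ v, F v = 0 := by
          intro v
          have := Hv v
          rw [hfz, zero_mul, add_zero] at this
          exact (mul_eq_zero.1 this).resolve_left hgz
        obtain ⟨v, hv⟩ := hs 1
        rw [key, hfz, hF0] at hv
        simp at hv
    · by_cases hgz : g z = 0
      · have hG0 : ∀ v, G v = 0 := by
          intro v
          have := Hv v
          rw [hgz, zero_mul, zero_add] at this
          exact (mul_eq_zero.1 this).resolve_left hfz
        obtain ⟨v, hv⟩ := hs 1
        rw [key, hgz, hG0] at hv
        simp at hv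
      · -- both nonzero: contradiction via two targets
        obtain ⟨v₁, hv₁⟩ := hs ((starRingEnd ℂ) (g z))
        obtain ⟨v₂, hv₂⟩ := hs ((starRingEnd ℂ) (g z) * Complex.I)
        rw [key] at hv₁ hv₂
        set p := f z
        set q := g z
        have H1 := Hv v₁
        have H2 := Hv v₂
        have E1c := congrArg (starRingEnd ℂ) hv₁
        have E2c := congrArg (starRingEnd ℂ) hv₂
        simp only [map_add, map_mul, Complex.conj_conj, Complex.conj_I] at E1c E2c
        -- eliminate G terms
        have B1 : (starRingEnd ℂ) p * (starRingEnd ℂ) q * F v₁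
            - p * (starRingEnd ℂ) q * (starRingEnd ℂ) (F v₁)
            = (starRingEnd ℂ) p * (starRingEnd ℂ) q := by
          have H1c := congrArg (starRingEnd ℂ) H1
          simp only [map_add, map_mul, map_zero] at H1c
          linear_combination (starRingEnd ℂ) p * hv₁ - p * H1c
        have C1 : (starRingEnd ℂ) p * q * F v₁ - p * q * (starRingEnd ℂ) (F v₁)
            = -(p * q) := by
          linear_combination (starRingEnd ℂ) p * H1 - p * E1c
        have B2 : (starRingEnd ℂ) p * (starRingEnd ℂ) q * F v₂
            - p * (starRingEnd ℂ) q * (starRingEnd ℂ) (F v₂)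
            = (starRingEnd ℂ) p * (starRingEnd ℂ) q * Complex.I := by
          have H2c := congrArg (starRingEnd ℂ) H2
          simp only [map_add, map_mul, map_zero] at H2c
          linear_combination (starRingEnd ℂ) p * hv₂ - p * H2c
        have C2 : (starRingEnd ℂ) p * q * F v₂ - p * q * (starRingEnd ℂ) (F v₂)
            = p * q * Complex.I := by
          linear_combination (starRingEnd ℂ) p * H2 - p * E2c
        have hqc : (starRingEnd ℂ) q ≠ 0 := by simpa using hgz
        have D1 : q * (starRingEnd ℂ) q * (p + (starRingEnd ℂ) p) = 0 := by
          linear_combination (starRingEnd ℂ) q * C1 - q * B1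
        have D2 : q * (starRingEnd ℂ) q * ((starRingEnd ℂ) p - p) * Complex.I = 0 := by
          linear_combination (starRingEnd ℂ) q * C2 - q * B2
        have e1 : p + (starRingEnd ℂ) p = 0 := by
          rcases mul_eq_zero.1 D1 with h | h
          · rcases mul_eq_zero.1 h with h | h
            · exact absurd h hgz
            · exact absurd h hqc
          · exact h
        have e2 : (starRingEnd ℂ) p - p = 0 := by
          rcases mul_eq_zero.1 D2 with h | h
          · rcases mul_eq_zero.1 h with h | h
            · rcases mul_eq_zero.1 h with h | h
              · exact absurd h hgz
              · exact absurd h hqc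
            · exact h
          · exact absurd h Complex.I_ne_zero
        have : p = 0 := by linear_combination (1/2 : ℂ) * e1 - (1/2 : ℂ) * e2
        exact hfz this
end

section
/- Let f, g : (ℂ²,0) → (ℂ,0) be holomorphic germs, and define φ : ℂ² → ℂ² by φ(x,y) = (y, f(x,y)·conj(g(x,y))). Then the critical locus of the real-analytic map φ is the set C(φ) = { (x,y) : |f(x,y)·∂g/∂x(x,y)|² = |g(x,y)·∂f/∂x(x,y)|² }. -/
open Complex Function

lemma key (A B : ℂ) :
    ¬ Surjective (fun u : ℂ => A * u + B * (starRingEnd ℂ) u) ↔ ‖A‖ = ‖B‖ := by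
  constructor
  · intro h
    by_contra hab
    apply h
    have hd : Complex.normSq A - Complex.normSq B ≠ 0 := by
      intro h0
      apply hab
      have h1 : ‖A‖ ^ 2 = ‖B‖ ^ 2 := by
        rw [Complex.sq_norm, Complex.sq_norm]; linarith
      nlinarith [norm_nonneg A, norm_nonneg B]
    intro w
    refine ⟨((starRingEnd ℂ) A * w - B * (starRingEnd ℂ) w) /
      ((Complex.normSq A - Complex.normSq B : ℝ) : ℂ), ?_⟩
    have hdc : ((Complex.normSq A - Complex.normSq B : ℝ) : ℂ) ≠ 0 := by
      exact_mod_cast hd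
    have hA : A * (starRingEnd ℂ) A = (Complex.normSq A : ℂ) := Complex.mul_conj A
    have hB : B * (starRingEnd ℂ) B = (Complex.normSq B : ℂ) := Complex.mul_conj B
    simp only [map_div₀, map_sub, map_mul, Complex.conj_conj, Complex.conj_ofReal]
    rw [mul_div_assoc', mul_div_assoc', ← add_div, div_eq_iff hdc]
    push_cast
    linear_combination w * hA - w * hB
  · intro hab hs
    have hAB : (Complex.normSq A : ℂ) = (Complex.normSq B : ℂ) := by
      have : Complex.normSq A = Complex.normSq B := by
        rw [← Complex.sq_norm, ← Complex.sq_norm, hab]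
      exact_mod_cast this
    have hA : (starRingEnd ℂ) A * A = (Complex.normSq A : ℂ) := by
      rw [mul_comm]; exact Complex.mul_conj A
    have hB : B * (starRingEnd ℂ) B = (Complex.normSq B : ℂ) := Complex.mul_conj B
    have key2 : ∀ w : ℂ, (starRingEnd ℂ) A * w = B * (starRingEnd ℂ) w := by
      intro w
      obtain ⟨u, hu⟩ := hs w
      simp only at hu
      rw [← hu]
      simp only [map_add, map_mul, Complex.conj_conj]
      linear_combination u * hA - u * hB + u * hAB
    have h1 := key2 1
    have h2 := key2 Complex.I
    simp at h1 h2
    have hB0 : B = 0 := by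
      rw [h1] at h2
      have hBB : B = -B := mul_right_cancel₀ Complex.I_ne_zero (by rw [h2]; ring)
      linear_combination hBB / 2
    have hA0 : A = 0 := by
      have : (starRingEnd ℂ) A = 0 := by rw [h1, hB0]
      simpa using congrArg (starRingEnd ℂ) this
    obtain ⟨u, hu⟩ := hs 1
    simp [hA0, hB0] at hu

lemma red (D : ℂ × ℂ →L[ℝ] ℂ) :
    Surjective (fun w : ℂ × ℂ => (w.2, D w)) ↔ Surjective (fun u : ℂ => D (u, 0)) := by
  constructor
  · intro h c
    obtain ⟨w, hw⟩ := h (0, c)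
    have h2 : w.2 = 0 := congrArg Prod.fst hw
    have h3 : D w = c := congrArg Prod.snd hw
    refine ⟨w.1, ?_⟩
    show D (w.1, 0) = c
    rw [show ((w.1, (0:ℂ)) : ℂ × ℂ) = w from by rw [← h2]]
    exact h3
  · rintro h ⟨a, b⟩
    obtain ⟨u, hu⟩ := h (b - D (0, a))
    refine ⟨(u, a), ?_⟩
    have : D (u, a) = D (u, 0) + D (0, a) := by
      rw [← map_add]; norm_num
    simp [this, hu]


/-- For holomorphic germs `f, g : (ℂ²,0) → (ℂ,0)` and
`φ(x,y) = (y, f(x,y)·conj(g(x,y)))`, the critical locus of the real-analytic map `φ` is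
`C(φ) = {(x,y) : |f·∂g/∂x|² = |g·∂f/∂x|²}`. -/
theorem stmt_4 (f g : ℂ × ℂ → ℂ) (hf : Differentiable ℂ f) (hg : Differentiable ℂ g)
    (hf0 : f 0 = 0) (hg0 : g 0 = 0) :
    {p : ℂ × ℂ | ¬ Function.Surjective
        (fderiv ℝ (fun q : ℂ × ℂ => (q.2, f q * (starRingEnd ℂ) (g q))) p)} =
    {p : ℂ × ℂ | ‖f p * fderiv ℂ g p (1, 0)‖^2
        = ‖g p * fderiv ℂ f p (1, 0)‖^2} := by
  ext p
  simp only [Set.mem_setOf_eq]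
  have hf' : HasFDerivAt f ((fderiv ℂ f p).restrictScalars ℝ) p :=
    ((hf p).hasFDerivAt).restrictScalars ℝ
  have hg' : HasFDerivAt g ((fderiv ℂ g p).restrictScalars ℝ) p :=
    ((hg p).hasFDerivAt).restrictScalars ℝ
  have hconj : HasFDerivAt (fun q : ℂ × ℂ => (starRingEnd ℂ) (g q))
      ((Complex.conjCLE.toContinuousLinearMap).comp ((fderiv ℂ g p).restrictScalars ℝ)) p :=
    (Complex.conjCLE.toContinuousLinearMap.hasFDerivAt).comp p hg'
  set D : ℂ × ℂ →L[ℝ] ℂ :=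
    f p • ((Complex.conjCLE.toContinuousLinearMap).comp ((fderiv ℂ g p).restrictScalars ℝ)) +
      ((starRingEnd ℂ) (g p)) • ((fderiv ℂ f p).restrictScalars ℝ) with hD
  have hmul : HasFDerivAt (fun q : ℂ × ℂ => f q * (starRingEnd ℂ) (g q)) D p := hf'.mul hconj
  have hF : HasFDerivAt (fun q : ℂ × ℂ => (q.2, f q * (starRingEnd ℂ) (g q)))
      ((ContinuousLinearMap.snd ℝ ℂ ℂ).prod D) p := HasFDerivAt.prodMk hasFDerivAt_snd hmul
  rw [hF.fderiv]
  set A : ℂ := (starRingEnd ℂ) (g p) * fderiv ℂ f p (1, 0) with hA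
  set B : ℂ := f p * (starRingEnd ℂ) (fderiv ℂ g p (1, 0)) with hB
  have hx : ∀ (F : ℂ × ℂ → ℂ) (u : ℂ), ((fderiv ℂ F p).restrictScalars ℝ) (u, 0)
      = u * fderiv ℂ F p (1, 0) := by
    intro F u
    have h10 : ((u, (0:ℂ)) : ℂ × ℂ) = u • ((1:ℂ), (0:ℂ)) := by simp
    rw [ContinuousLinearMap.coe_restrictScalars', h10, map_smul, smul_eq_mul]
  have h2 : (fun u : ℂ => D (u, 0)) = fun u : ℂ => A * u + B * (starRingEnd ℂ) u := by
    funext u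
    simp only [hD, ContinuousLinearMap.add_apply, ContinuousLinearMap.smul_apply,
      ContinuousLinearMap.comp_apply, hx, ContinuousLinearEquiv.coe_coe,
      Complex.conjCLE_apply, map_mul, smul_eq_mul]
    ring
  have hco : ⇑((ContinuousLinearMap.snd ℝ ℂ ℂ).prod D) = fun w : ℂ × ℂ => (w.2, D w) := rfl
  rw [hco, (red D).not, h2, key A B]
  have e1 : ‖A‖ = ‖g p * fderiv ℂ f p (1, 0)‖ := by
    rw [hA, norm_mul, norm_mul, Complex.norm_conj]
  have e2 : ‖B‖ = ‖f p * fderiv ℂ g p (1, 0)‖ := by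
    rw [hB, norm_mul, norm_mul, Complex.norm_conj]
  rw [e1, e2]
  constructor
  · intro h; rw [h]
  · intro h
    nlinarith [norm_nonneg (g p * fderiv ℂ f p (1, 0)),
      norm_nonneg (f p * fderiv ℂ g p (1, 0))]
end

section
/- Let f, g : (ℂ²,0) → (ℂ,0) be holomorphic with g depending only on the second variable y, i.e. g(x,y) = g'(y). Let φ(x,y) = (y, f(x,y)·conj(g(x,y))). Then the critical locus of φ equals {g = 0} ∪ {∂f/∂x = 0}, and hence is a complex analytic curve in ℂ². -/
/-- For holomorphic `f : (ℂ²,0) → (ℂ,0)` and `g(x,y) = g'(y)` depending only on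
`y`, the critical locus of `φ(x,y) = (y, f·conj g)` equals `{g = 0} ∪ {∂f/∂x = 0}`,
a complex analytic curve in `ℂ²`. -/
theorem stmt_5 (f : ℂ × ℂ → ℂ) (g' : ℂ → ℂ)
    (hf : Differentiable ℂ f) (hg' : Differentiable ℂ g')
    (hf0 : f 0 = 0) (hg0 : g' 0 = 0) :
    {p : ℂ × ℂ | ¬ Function.Surjective
        (fderiv ℝ (fun q : ℂ × ℂ => (q.2, f q * (starRingEnd ℂ) (g' q.2))) p)} =
    {p : ℂ × ℂ | g' p.2 = 0} ∪ {p : ℂ × ℂ | fderiv ℂ f p (1, 0) = 0} := by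
  ext p
  simp only [Set.mem_setOf_eq, Set.mem_union]
  set F := fderiv ℂ f p with hFdef
  set d := deriv g' p.2 with hddef
  have hdf : HasFDerivAt f (F.restrictScalars ℝ) p :=
    ((hf p).hasFDerivAt).restrictScalars ℝ
  have hsnd : HasFDerivAt (fun q : ℂ × ℂ => q.2) (ContinuousLinearMap.snd ℝ ℂ ℂ) p :=
    hasFDerivAt_snd
  have hdg : HasFDerivAt g'
      ((ContinuousLinearMap.smulRight (1 : ℂ →L[ℂ] ℂ) d).restrictScalars ℝ) p.2 :=
    ((hg' p.2).hasDerivAt.hasFDerivAt).restrictScalars ℝ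
  have hgsnd := hdg.comp p hsnd
  have hconj : HasFDerivAt (fun q : ℂ × ℂ => (starRingEnd ℂ) (g' q.2))
      ((Complex.conjCLE.toContinuousLinearMap).comp
        ((((ContinuousLinearMap.smulRight (1 : ℂ →L[ℂ] ℂ) d).restrictScalars ℝ)).comp
          (ContinuousLinearMap.snd ℝ ℂ ℂ))) p :=
    (Complex.conjCLE.toContinuousLinearMap.hasFDerivAt).comp p hgsnd
  have hphi := HasFDerivAt.prodMk hsnd (HasFDerivAt.fun_mul hdf hconj)
  rw [hphi.fderiv]
  set L := (ContinuousLinearMap.snd ℝ ℂ ℂ).prod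
      (f p • ((Complex.conjCLE.toContinuousLinearMap).comp
        ((((ContinuousLinearMap.smulRight (1 : ℂ →L[ℂ] ℂ) d).restrictScalars ℝ)).comp
          (ContinuousLinearMap.snd ℝ ℂ ℂ))) +
       (starRingEnd ℂ) (g' p.2) • (F.restrictScalars ℝ)) with hLdef
  have hLapp : ∀ u v : ℂ, L (u, v) =
      (v, f p * (starRingEnd ℂ) (d * v) + (starRingEnd ℂ) (g' p.2) * F (u, v)) := by
    intro u v
    simp [hLdef, smul_eq_mul, mul_comm]
  have hFsplit : ∀ u v : ℂ, F (u, v) = u * F (1, 0) + v * F (0, 1) := by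
    intro u v
    have : (u, v) = u • ((1 : ℂ), (0 : ℂ)) + v • ((0 : ℂ), (1 : ℂ)) := by
      simp [Prod.ext_iff]
    rw [this, map_add, map_smul, map_smul, smul_eq_mul, smul_eq_mul]
  constructor
  · intro hns
    by_contra hc
    push_neg at hc
    obtain ⟨ha, hx⟩ := hc
    apply hns
    intro w
    refine ⟨(((w.2 - f p * (starRingEnd ℂ) (d * w.1)) / (starRingEnd ℂ) (g' p.2)
        - w.1 * F (0, 1)) / F (1, 0), w.1), ?_⟩
    have ha' : (starRingEnd ℂ) (g' p.2) ≠ 0 := by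
      simpa using ha
    rw [hLapp, hFsplit]
    ext
    · rfl
    · show f p * (starRingEnd ℂ) (d * w.1) + (starRingEnd ℂ) (g' p.2) * _ = w.2
      field_simp
      ring
  · intro h hs
    obtain ⟨⟨u, v⟩, huv⟩ := hs (0, 1)
    rw [hLapp] at huv
    have hv : v = 0 := congrArg Prod.fst huv
    have h2 : f p * (starRingEnd ℂ) (d * v) + (starRingEnd ℂ) (g' p.2) * F (u, v) = 1 :=
      congrArg Prod.snd huv
    rw [hv, hFsplit] at h2
    rcases h with h | h <;> simp [h] at h2
end

section
/- Let π : F → D be a finite covering map of smooth surfaces away from a closed set, i.e. π : F \ π^{-1}(Q) → D \ Q is a finite covering with Q ⊂ D closed, and let v be a vector field on D that vanishes on Q and whose flow satisfies lim_{τ→∞} q(τ, u) ∈ Q for every u ∈ ∂D. Let ṽ be the lift of v to F (set equal to 0 on P := π^{-1}(Q)). Then for every z ∈ ∂F, the flow q̃ of ṽ satisfies: lim_{τ→∞} q̃(τ, z) exists and lies in P. -/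
open Filter Metric

/-- Let `π : F → D` restrict to a finite covering off a closed set `Q ⊆ D`, let
`v` be a vector field on `D` null on `Q` whose flow `q` satisfies `lim_{τ→∞} q(τ,u) ∈ Q`, and
let `q̃` be the flow of the lift `ṽ` of `v` to `F`, so that `π ∘ q̃(τ,·) = q(τ, π ·)`. Then for
every `z ∈ ∂F` the limit `lim_{τ→∞} q̃(τ, z)` exists and lies in `P = π⁻¹(Q)`. The covering
structure near `Q` is encoded by finiteness of fibres over `Q` together with the fact that the
preimage of a small neighbourhood of `p ∈ Q` decomposes into small neighbourhoods of the
finitely many points of `π⁻¹(p)`. -/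
theorem stmt_8 {F D : Type*} [MetricSpace F] [MetricSpace D] [CompactSpace F]
    (π : F → D) (hπ : Continuous π) (Q : Set D) (hQ : IsClosed Q)
    (q : ℝ → D → D) (qt : ℝ → F → F)
    (hqcont : ∀ z : F, Continuous (fun τ => qt τ z))
    (hcomm : ∀ τ : ℝ, 0 ≤ τ → ∀ z, π (qt τ z) = q τ (π z))
    (hfib : ∀ p ∈ Q, (π ⁻¹' {p}).Finite)
    (hloc : ∀ p ∈ Q, ∀ ε > (0:ℝ), ∃ U ∈ nhds p, π ⁻¹' U ⊆ ⋃ y ∈ π ⁻¹' {p}, ball y ε)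
    (z : F) (p : D) (hp : p ∈ Q)
    (hlim : Tendsto (fun τ => q τ (π z)) atTop (nhds p)) :
    ∃ pt ∈ π ⁻¹' Q, Tendsto (fun τ => qt τ z) atTop (nhds pt) := by
  -- take a cluster point `y` of the curve `τ ↦ qt τ z` (exists since `F` is compact)
  obtain ⟨y, hy⟩ := exists_clusterPt_of_compactSpace (Filter.map (fun τ => qt τ z) atTop)
  have hy' : MapClusterPt y atTop (fun τ => qt τ z) := hy
  -- `π y = p`
  have hπy : π y = p := by
    have h1 : MapClusterPt (π y) atTop (fun τ => π (qt τ z)) :=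
      hy'.continuousAt_comp hπ.continuousAt
    have h2 : MapClusterPt (π y) atTop (fun τ => q τ (π z)) := by
      rw [mapClusterPt_iff_frequently] at h1 ⊢
      intro s hs
      exact (h1 s hs).mp ((eventually_ge_atTop (0:ℝ)).mono fun τ hτ h => by
        rwa [hcomm τ hτ z] at h)
    have h2' : ClusterPt (π y) (Filter.map (fun τ => q τ (π z)) atTop) := h2
    exact eq_of_nhds_neBot (ClusterPt.mono h2' hlim)
  refine ⟨y, by simp [Set.mem_preimage, hπy, hp], ?_⟩
  -- choose a separation radius for the finite fibre
  rw [Metric.tendsto_nhds]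
  intro ε hε
  obtain ⟨δ, hδ0, hδε, hsep⟩ :
      ∃ δ > (0:ℝ), δ ≤ ε ∧ ∀ y' ∈ π ⁻¹' {p}, y' ≠ y → 2 * δ < dist y y' := by
    classical
    have hfin := hfib p hp
    set T := hfin.toFinset.filter (· ≠ y) with hT
    by_cases hTne : T.Nonempty
    · set m := T.inf' hTne (fun y' => dist y y') with hm
      have hmpos : 0 < m := by
        rw [hm, Finset.lt_inf'_iff]
        intro y' hy'
        have hy'ne : y' ≠ y := (Finset.mem_filter.1 hy').2
        simpa [dist_comm] using dist_pos.2 hy'ne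
      refine ⟨min ε (m / 3), lt_min hε (by linarith), min_le_left _ _, ?_⟩
      intro y' hy'fib hy'ne
      have hmem : y' ∈ T := Finset.mem_filter.2 ⟨hfin.mem_toFinset.2 hy'fib, hy'ne⟩
      have hle : m ≤ dist y y' := Finset.inf'_le _ hmem
      have : min ε (m / 3) ≤ m / 3 := min_le_right _ _
      linarith
    · refine ⟨ε, hε, le_refl _, ?_⟩
      intro y' hy'fib hy'ne
      have hmem : y' ∈ T := Finset.mem_filter.2 ⟨hfin.mem_toFinset.2 hy'fib, hy'ne⟩
      rw [Finset.not_nonempty_iff_eq_empty.1 hTne] at hmem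
      exact absurd hmem (Finset.notMem_empty y')
  -- the curve is eventually in the union of δ-balls around the fibre
  obtain ⟨U, hU, hUsub⟩ := hloc p hp δ hδ0
  have hev : ∀ᶠ τ in atTop, qt τ z ∈ ⋃ y' ∈ π ⁻¹' {p}, ball y' δ := by
    filter_upwards [hlim.eventually_mem hU, eventually_ge_atTop (0:ℝ)] with τ h1 h2
    exact hUsub (by rw [Set.mem_preimage, hcomm τ h2 z]; exact h1)
  -- it suffices to show `dist (qt τ z) y < δ` eventually
  have key : ∀ᶠ τ in atTop, dist (qt τ z) y < δ := by
    by_contra hcon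
    rw [Filter.not_eventually] at hcon
    obtain ⟨T₀, hT₀⟩ := eventually_atTop.1 hev
    -- a time `a ≥ T₀` with the curve δ-close to `y`
    have hfreq : ∃ᶠ τ in atTop, qt τ z ∈ ball y δ :=
      (mapClusterPt_iff_frequently.1 hy') _ (ball_mem_nhds _ hδ0)
    obtain ⟨a, ⟨haball, haT⟩⟩ := (hfreq.and_eventually (eventually_ge_atTop T₀)).exists
    -- a later time `b ≥ a` with the curve δ-far from `y`
    obtain ⟨b, ⟨hbfar, hba⟩⟩ := (hcon.and_eventually (eventually_ge_atTop a)).exists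
    -- intermediate value: a time `c ∈ [a,b]` at exact distance δ
    have hg : Continuous fun τ => dist (qt τ z) y := (hqcont z).dist continuous_const
    have hmemIcc : δ ∈ Set.Icc (dist (qt a z) y) (dist (qt b z) y) :=
      ⟨le_of_lt (mem_ball.1 haball), not_lt.1 hbfar⟩
    obtain ⟨c, hcIcc, hgc⟩ := intermediate_value_Icc hba hg.continuousOn hmemIcc
    -- `qt c z` is in some δ-ball around a fibre point
    have hcmem := hT₀ c (le_trans haT hcIcc.1)
    rw [Set.mem_iUnion₂] at hcmem
    obtain ⟨y', hy'fib, hy'ball⟩ := hcmem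
    rw [mem_ball] at hy'ball
    by_cases hyy : y' = y
    · rw [hyy] at hy'ball
      have hgc' : dist (qt c z) y = δ := hgc
      exact absurd hgc' (ne_of_lt hy'ball)
    · have h2δ := hsep y' hy'fib hyy
      have hgc' : dist (qt c z) y = δ := hgc
      have htri : dist y y' ≤ dist y (qt c z) + dist (qt c z) y' := dist_triangle _ _ _
      rw [dist_comm y (qt c z), hgc'] at htri
      linarith
  exact key.mono fun τ h => lt_of_lt_of_le h hδε
end
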